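/- Let M be the additive submonoid of Q_{≥0} generated by S = {x ∈ Z[1/2] : x ≥ 0} ∪ {x ∈ Z[1/3] : x ≥ 4/3}. Then the denominator of every atom of M is a power of 3; in particular every atom of M lies in Z[1/3], and 1/2 ∈ M does not belong to the difference group of the submonoid generated by the atoms of M, so M is not almost atomic. Moreover M is quasi-atomic. -/

import Mathlib

/-- `x` is invertible within the subset `S` of the ambient monoid. -/
def SUnit {A : Type*} [AddCommMonoid A] (S : Set A) (x : A) : Prop := ∃ y ∈ S, x + y = 0

/-- `a` is an atom of the subset (submonoid) `S`: it is non-invertible in `S` and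
cannot be written as a sum of two non-invertible elements of `S`. -/
def SAtom {A : Type*} [AddCommMonoid A] (S : Set A) (a : A) : Prop :=
  a ∈ S ∧ ¬ SUnit S a ∧ ∀ b ∈ S, ∀ c ∈ S, a = b + c → SUnit S b ∨ SUnit S c

/-- `x` is an atomic element of `S`: invertible in `S` or a finite sum of atoms of `S`. -/
def SAtomicElem {A : Type*} [AddCommMonoid A] (S : Set A) (x : A) : Prop :=
  SUnit S x ∨ ∃ l : Multiset A, (∀ a ∈ l, SAtom S a) ∧ l.sum = x

/-- The subset (submonoid) `S` is atomic. -/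
def SAtomic {A : Type*} [AddCommMonoid A] (S : Set A) : Prop :=
  ∀ x ∈ S, SAtomicElem S x

/-- The generating set `S = Z[1/2]_{≥0} ∪ Z[1/3]_{≥4/3}`. -/
def S16 : Set ℚ :=
  {x : ℚ | (0 ≤ x ∧ ∃ a : ℤ, ∃ k : ℕ, x = (a : ℚ) / 2 ^ k) ∨
           ((4 : ℚ) / 3 ≤ x ∧ ∃ a : ℤ, ∃ k : ℕ, x = (a : ℚ) / 3 ^ k)}

/-- The Puiseux monoid `M = ⟨Z[1/2]_{≥0} ∪ Z[1/3]_{≥4/3}⟩`. -/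
def M16 : Set ℚ := (AddSubmonoid.closure S16 : Set ℚ)

/-- `x` is a dyadic rational. -/
def Dy (x : ℚ) : Prop := ∃ a : ℤ, ∃ k : ℕ, x = (a : ℚ) / 2 ^ k

/-- `x` is a triadic rational. -/
def Tri (x : ℚ) : Prop := ∃ a : ℤ, ∃ k : ℕ, x = (a : ℚ) / 3 ^ k

lemma Dy.add {x y : ℚ} (hx : Dy x) (hy : Dy y) : Dy (x + y) := by
  obtain ⟨a, k, rfl⟩ := hx; obtain ⟨b, j, rfl⟩ := hy
  exact ⟨a * 2 ^ j + b * 2 ^ k, k + j, by push_cast; field_simp; ring_nf⟩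

lemma Tri.add {x y : ℚ} (hx : Tri x) (hy : Tri y) : Tri (x + y) := by
  obtain ⟨a, k, rfl⟩ := hx; obtain ⟨b, j, rfl⟩ := hy
  exact ⟨a * 3 ^ j + b * 3 ^ k, k + j, by push_cast; field_simp; ring_nf⟩

lemma Tri.neg {x : ℚ} (hx : Tri x) : Tri (-x) := by
  obtain ⟨a, k, rfl⟩ := hx
  exact ⟨-a, k, by push_cast; ring⟩

lemma not_tri_half : ¬ Tri ((1:ℚ)/2) := by
  rintro ⟨a, k, h⟩
  have h2 : (3:ℚ)^k = 2 * a := by field_simp at h; linarith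
  have h3 : (3:ℤ)^k = 2 * a := by exact_mod_cast h2
  have ho : Odd ((3:ℤ)^k) := Odd.pow ⟨1, by ring⟩
  rw [← Int.not_even_iff_odd] at ho
  exact ho ⟨a, by linarith⟩

lemma not_dy_43 : ¬ Dy ((4:ℚ)/3) := by
  rintro ⟨a, k, h⟩
  have h2 : (4:ℚ) * 2^k = 3 * a := by field_simp at h; linarith
  have h3 : (4:ℤ) * 2^k = 3 * a := by exact_mod_cast h2
  have hd : (3:ℤ) ∣ 2^(k+2) := ⟨a, by rw [show ((2:ℤ))^(k+2) = 4 * 2^k by ring]; exact h3⟩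
  have := Int.Prime.dvd_pow' (by norm_num) hd
  norm_num at this

lemma mem_M16_dy {x : ℚ} (h0 : 0 ≤ x) (hd : Dy x) : x ∈ M16 :=
  AddSubmonoid.subset_closure (Or.inl ⟨h0, hd⟩)

lemma mem_M16_tri {x : ℚ} (h0 : (4:ℚ)/3 ≤ x) (ht : Tri x) : x ∈ M16 :=
  AddSubmonoid.subset_closure (Or.inr ⟨h0, ht⟩)

lemma M16_struct {z : ℚ} (hz : z ∈ M16) :
    ∃ x y : ℚ, (0 ≤ x ∧ Dy x) ∧ (y = 0 ∨ ((4:ℚ)/3 ≤ y ∧ Tri y)) ∧ z = x + y := by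
  induction hz using AddSubmonoid.closure_induction with
  | mem w hw =>
    rcases hw with ⟨h0, hd⟩ | ⟨h43, ht⟩
    · exact ⟨w, 0, ⟨h0, hd⟩, Or.inl rfl, by ring⟩
    · exact ⟨0, w, ⟨le_refl 0, 0, 0, by norm_num⟩, Or.inr ⟨h43, ht⟩, by ring⟩
  | zero => exact ⟨0, 0, ⟨le_refl 0, 0, 0, by norm_num⟩, Or.inl rfl, by ring⟩
  | add u v _ _ ihu ihv =>
    obtain ⟨x1, y1, ⟨hx1, hd1⟩, hy1, rfl⟩ := ihu
    obtain ⟨x2, y2, ⟨hx2, hd2⟩, hy2, rfl⟩ := ihv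
    refine ⟨x1 + x2, y1 + y2, ⟨by linarith, hd1.add hd2⟩, ?_, by ring⟩
    rcases hy1 with rfl | ⟨h1, t1⟩
    · simpa using hy2
    rcases hy2 with rfl | ⟨h2, t2⟩
    · exact Or.inr ⟨by simpa using h1, by simpa using t1⟩
    · exact Or.inr ⟨by linarith, t1.add t2⟩

lemma M16_nonneg {z : ℚ} (hz : z ∈ M16) : 0 ≤ z := by
  obtain ⟨x, y, ⟨hx, _⟩, hy, rfl⟩ := M16_struct hz
  rcases hy with rfl | ⟨hy, _⟩ <;> linarith

lemma zero_mem_M16 : (0:ℚ) ∈ M16 := AddSubmonoid.zero_mem _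

lemma sunit_nonpos {x : ℚ} (h : SUnit M16 x) : x ≤ 0 := by
  obtain ⟨y, hy, hxy⟩ := h
  have := M16_nonneg hy
  linarith

lemma sunit_zero : SUnit M16 0 := ⟨0, zero_mem_M16, by ring⟩

lemma sunit_iff {x : ℚ} (hx : x ∈ M16) : SUnit M16 x ↔ x = 0 := by
  constructor
  · intro h; have := M16_nonneg hx; have := sunit_nonpos h; linarith
  · rintro rfl; exact sunit_zero

/-- `4/3` is an atom of `M16`. -/
lemma atom_43 : SAtom M16 ((4:ℚ)/3) := by
  refine ⟨mem_M16_tri le_rfl ⟨4, 1, by norm_num⟩, ?_, ?_⟩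
  · intro h; have := sunit_nonpos h; linarith
  · intro b hb c hc habc
    obtain ⟨x1, y1, ⟨hx1, hd1⟩, hy1, rfl⟩ := M16_struct hb
    obtain ⟨x2, y2, ⟨hx2, hd2⟩, hy2, rfl⟩ := M16_struct hc
    rcases hy1 with rfl | ⟨h1, t1⟩
    · rcases hy2 with rfl | ⟨h2, t2⟩
      · exact absurd (habc ▸ (by simpa using hd1.add hd2 : Dy (x1 + 0 + (x2 + 0)))) not_dy_43
      · -- b = x1, and x1 + x2 ≤ 0 so x1 = 0
        left
        rw [sunit_iff hb]
        have : x1 = 0 := by linarith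
        simp [this]
    · rcases hy2 with rfl | ⟨h2, t2⟩
      · right
        rw [sunit_iff hc]
        have : x2 = 0 := by linarith
        simp [this]
      · exfalso; linarith

/-- Every atom of `M16` is triadic. -/
lemma atom_tri {x : ℚ} (h : SAtom M16 x) : Tri x := by
  obtain ⟨hx, hnu, hsplit⟩ := h
  obtain ⟨x2, y, ⟨h0, hd⟩, hy, rfl⟩ := M16_struct hx
  have hymem : y ∈ M16 := by
    rcases hy with rfl | ⟨h43, ht⟩
    · exact zero_mem_M16
    · exact mem_M16_tri h43 ht
  have hynn : 0 ≤ y := M16_nonneg hymem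
  rcases eq_or_lt_of_le h0 with heq | hpos
  · -- x2 = 0
    rcases hy with rfl | ⟨_, ht⟩
    · exact absurd (show SUnit M16 (x2 + 0) by rw [← heq]; simpa using sunit_zero) hnu
    · rw [← heq, zero_add]; exact ht
  · -- x2 > 0 : contradiction with atomicity
    exfalso
    have hd2 : Dy (x2 / 2) := by
      obtain ⟨a, k, rfl⟩ := hd
      exact ⟨a, k + 1, by push_cast; field_simp; ring_nf⟩
    have hb : x2 / 2 ∈ M16 := mem_M16_dy (by linarith) hd2
    have hcmem : x2 / 2 + y ∈ M16 := AddSubmonoid.add_mem _ hb hymem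
    have := hsplit (x2/2) hb (x2/2 + y) hcmem (by ring)
    rcases this with h | h
    · have := sunit_nonpos h; linarith
    · have := sunit_nonpos h; linarith

lemma sum_atoms_tri (l : Multiset ℚ) (h : ∀ a ∈ l, SAtom M16 a) : Tri l.sum := by
  induction l using Multiset.induction_on with
  | empty => exact ⟨0, 0, by norm_num⟩
  | cons a s ih =>
    rw [Multiset.sum_cons]
    exact (atom_tri (h a (Multiset.mem_cons_self a s))).add
      (ih fun b hb => h b (Multiset.mem_cons_of_mem hb))

lemma half_mem : (1:ℚ)/2 ∈ M16 := mem_M16_dy (by norm_num) ⟨1, 1, by norm_num⟩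

lemma no_diff : ¬ ∃ u v : ℚ,
      (∃ l : Multiset ℚ, (∀ a ∈ l, SAtom M16 a) ∧ l.sum = u) ∧
      (∃ l : Multiset ℚ, (∀ a ∈ l, SAtom M16 a) ∧ l.sum = v) ∧
      (1 : ℚ) / 2 = u - v := by
  rintro ⟨u, v, ⟨lu, hu, rfl⟩, ⟨lv, hv, rfl⟩, heq⟩
  have htu := sum_atoms_tri lu hu
  have htv := sum_atoms_tri lv hv
  have : Tri ((1:ℚ)/2) := by
    rw [heq, sub_eq_add_neg]
    exact htu.add htv.neg
  exact not_tri_half this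

lemma atomic_elem_sum {x : ℚ} (hx : x ∈ M16) (h : SAtomicElem M16 x) :
    ∃ l : Multiset ℚ, (∀ a ∈ l, SAtom M16 a) ∧ l.sum = x := by
  rcases h with h | h
  · exact ⟨0, by simp, by simp [((sunit_iff hx).mp h).symm]⟩
  · exact h

theorem quasi_atomic_not_almost_atomic :
    (∀ x : ℚ, SAtom M16 x → ∃ a : ℤ, ∃ k : ℕ, x = (a : ℚ) / 3 ^ k) ∧
    (1 : ℚ) / 2 ∈ M16 ∧
    (¬ ∃ u v : ℚ,
      (∃ l : Multiset ℚ, (∀ a ∈ l, SAtom M16 a) ∧ l.sum = u) ∧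
      (∃ l : Multiset ℚ, (∀ a ∈ l, SAtom M16 a) ∧ l.sum = v) ∧
      (1 : ℚ) / 2 = u - v) ∧
    (¬ ∀ c ∈ M16, c ≠ 0 →
      ∃ b ∈ M16, SAtomicElem M16 b ∧ SAtomicElem M16 (b + c)) ∧
    (∀ c ∈ M16, c ≠ 0 → ∃ b ∈ M16, SAtomicElem M16 (b + c)) := by
  refine ⟨fun x h => atom_tri h, half_mem, no_diff, ?_, ?_⟩
  · -- not almost atomic
    intro h
    obtain ⟨b, hb, hba, hbca⟩ := h ((1:ℚ)/2) half_mem (by norm_num)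
    obtain ⟨lv, hv, hvs⟩ := atomic_elem_sum hb hba
    have hbc : b + (1:ℚ)/2 ∈ M16 := AddSubmonoid.add_mem _ hb half_mem
    obtain ⟨lu, hu, hus⟩ := atomic_elem_sum hbc hbca
    exact no_diff ⟨b + 1/2, b, ⟨lu, hu, hus⟩, ⟨lv, hv, hvs⟩, by ring⟩
  · -- quasi-atomic
    intro c hc hc0
    have hpos : 0 < c := lt_of_le_of_ne (M16_nonneg hc) (Ne.symm hc0)
    have hnpos : 0 < c.num := Rat.num_pos.mpr hpos
    have hdpos : 0 < c.den := c.pos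
    refine ⟨(4 * c.den - 1) • c, AddSubmonoid.nsmul_mem _ hc _, ?_⟩
    right
    refine ⟨Multiset.replicate (3 * c.num.toNat) ((4:ℚ)/3), ?_, ?_⟩
    · intro a ha
      rw [Multiset.eq_of_mem_replicate ha]
      exact atom_43
    · rw [Multiset.sum_replicate]
      have h1 : (4 * c.den - 1) • c + c = (4 * c.den) • c := by
        rw [← succ_nsmul]
        congr 1
        omega
      rw [h1, nsmul_eq_mul, nsmul_eq_mul]
      have hdc : (c.den : ℚ) * c = c.num := by
        have hd : (c.den : ℚ) ≠ 0 := by exact_mod_cast c.den_ne_zero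
        rw [mul_comm, eq_comm]
        exact (div_eq_iff hd).mp (Rat.num_div_den c)
      have hnc : ((c.num.toNat : ℚ)) = (c.num : ℚ) := by
        exact_mod_cast Int.toNat_of_nonneg hnpos.le
      push_cast
      rw [show (3:ℚ) * (c.num.toNat : ℚ) * (4/3) = 4 * (c.num.toNat : ℚ) by ring, hnc]
      rw [show (4:ℚ) * (c.den : ℚ) * c = 4 * ((c.den:ℚ) * c) by ring, hdc]
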